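/- arXiv:2502.09934 — 2 statements merged into one kernel-verified Lean document; each statement's English description precedes it below -/
import Mathlib

section
/- Suppose L(r₁, r₂) = f₁(r₁) + f₂(r₂) − h₁(r₁) h₂(r₂) for scalar functions f₁, f₂, h₁, h₂. Let C^X ∈ ℝ^{n×n}, C^Y ∈ ℝ^{m×m}, define the 4-tensor M by M_{i,j,i',j'} = L(C^X_{i,i'}, C^Y_{j,j'}), and let γ ∈ ℝ^{n×m} with row-sum vector γ₁ = γ 1_m and column-sum vector γ₂ = γ^⊤ 1_n. Then M ∘ γ = f₁(C^X) γ₁ 1_m^⊤ + 1_n γ₂^⊤ f₂(C^Y)^⊤ − h₁(C^X) γ h₂(C^Y)^⊤, where f₁(C^X) denotes entrywise application. -/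
/-- Separable-cost decomposition of the tensor action `M ∘ γ`. -/
theorem tensor_action_decomposition {n m : ℕ}
    (f₁ f₂ h₁ h₂ : ℝ → ℝ) (CX : Fin n → Fin n → ℝ) (CY : Fin m → Fin m → ℝ)
    (L : ℝ → ℝ → ℝ) (hL : ∀ r₁ r₂, L r₁ r₂ = f₁ r₁ + f₂ r₂ - h₁ r₁ * h₂ r₂)
    (M : Fin n → Fin m → Fin n → Fin m → ℝ)
    (hM : ∀ i j i' j', M i j i' j' = L (CX i i') (CY j j'))
    (γ : Fin n → Fin m → ℝ) (i : Fin n) (j : Fin m) :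
    ∑ i', ∑ j', M i j i' j' * γ i' j'
      = (∑ i', f₁ (CX i i') * (∑ j', γ i' j'))
        + (∑ j', (∑ i', γ i' j') * f₂ (CY j j'))
        - ∑ i', ∑ j', h₁ (CX i i') * γ i' j' * h₂ (CY j j') := by
  simp only [hM, hL]
  have : (∑ j', (∑ i', γ i' j') * f₂ (CY j j'))
      = ∑ i', ∑ j', γ i' j' * f₂ (CY j j') := by
    rw [Finset.sum_comm]
    simp [Finset.sum_mul]
  rw [this]
  simp only [← Finset.sum_sub_distrib, ← Finset.sum_add_distrib, Finset.mul_sum,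
    Finset.sum_mul]
  apply Finset.sum_congr rfl; intro i' _
  apply Finset.sum_congr rfl; intro j' _
  ring
end

section
/- In the discrete setting with |μ| ≤ |ν|, let C ≥ 0 be the feature cost matrix, M ≥ 0 the structural cost tensor, and suppose 2λ > ω₁ · (max C)/|μ| + ω₂ · max M. Then every minimizer γ of the fused partial GW objective ω₁⟨C,γ⟩ + ω₂⟨M, γ⊗γ⟩ + λ(|μ|² + |ν|² − 2|γ|²) over Γ_≤(μ,ν) satisfies |γ| = |μ| = min(|μ|,|ν|). -/
lemma exists_full_extension {n m : ℕ} [NeZero n] [NeZero m]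
    (p : Fin n → ℝ) (q : Fin m → ℝ)
    (hpq : ∑ i, p i ≤ ∑ j, q j)
    (γ : Fin n → Fin m → ℝ) (hγ0 : ∀ i j, 0 ≤ γ i j)
    (hrow : ∀ i, ∑ j, γ i j ≤ p i) (hcol : ∀ j, ∑ i, γ i j ≤ q j) :
    ∃ γs : Fin n → Fin m → ℝ, (∀ i j, γ i j ≤ γs i j) ∧ (∀ i, ∑ j, γs i j ≤ p i) ∧
      (∀ j, ∑ i, γs i j ≤ q j) ∧ ∑ i, ∑ j, γs i j = ∑ i, p i := by
  classical
  set K : Set (Fin n → Fin m → ℝ) :=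
    {γ' | (∀ i j, γ i j ≤ γ' i j) ∧ (∀ i, ∑ j, γ' i j ≤ p i) ∧ (∀ j, ∑ i, γ' i j ≤ q j)}
    with hK
  have hKne : K.Nonempty := ⟨γ, fun i j => le_refl _, hrow, hcol⟩
  have hKnonneg : ∀ γ' ∈ K, ∀ i j, (0:ℝ) ≤ γ' i j := fun γ' h i j =>
    le_trans (hγ0 i j) (h.1 i j)
  -- K is closed
  have hKclosed : IsClosed K := by
    have h1 : IsClosed {γ' : Fin n → Fin m → ℝ | ∀ i j, γ i j ≤ γ' i j} := by
      have : {γ' : Fin n → Fin m → ℝ | ∀ i j, γ i j ≤ γ' i j}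
          = ⋂ i, ⋂ j, {γ' | γ i j ≤ γ' i j} := by ext x; simp [Set.mem_iInter]
      rw [this]
      exact isClosed_iInter fun i => isClosed_iInter fun j =>
        isClosed_le continuous_const ((continuous_apply j).comp (continuous_apply i))
    have h2 : IsClosed {γ' : Fin n → Fin m → ℝ | ∀ i, ∑ j, γ' i j ≤ p i} := by
      have : {γ' : Fin n → Fin m → ℝ | ∀ i, ∑ j, γ' i j ≤ p i}
          = ⋂ i, {γ' | ∑ j, γ' i j ≤ p i} := by ext x; simp [Set.mem_iInter]
      rw [this]
      exact isClosed_iInter fun i => isClosed_le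
        (continuous_finset_sum _ fun j _ => (continuous_apply j).comp (continuous_apply i))
        continuous_const
    have h3 : IsClosed {γ' : Fin n → Fin m → ℝ | ∀ j, ∑ i, γ' i j ≤ q j} := by
      have : {γ' : Fin n → Fin m → ℝ | ∀ j, ∑ i, γ' i j ≤ q j}
          = ⋂ j, {γ' | ∑ i, γ' i j ≤ q j} := by ext x; simp [Set.mem_iInter]
      rw [this]
      exact isClosed_iInter fun j => isClosed_le
        (continuous_finset_sum _ fun i _ => (continuous_apply j).comp (continuous_apply i))
        continuous_const
    rw [hK]
    exact h1.inter (h2.inter h3)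
  -- K is compact
  have hKcompact : IsCompact K := by
    have hsub : K ⊆ Set.univ.pi (fun i => Set.univ.pi fun _ : Fin m => Set.Icc 0 (p i)) := by
      intro γ' hγ'
      intro i _
      intro j _
      refine ⟨hKnonneg γ' hγ' i j, ?_⟩
      calc γ' i j ≤ ∑ j', γ' i j' :=
            Finset.single_le_sum (fun j' _ => hKnonneg γ' hγ' i j') (Finset.mem_univ j)
        _ ≤ p i := hγ'.2.1 i
    exact IsCompact.of_isClosed_subset
      (isCompact_univ_pi fun i => isCompact_univ_pi fun _ => isCompact_Icc) hKclosed hsub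
  -- mass function
  have hcont : Continuous (fun γ' : Fin n → Fin m → ℝ => ∑ i, ∑ j, γ' i j) :=
    continuous_finset_sum _ fun i _ => continuous_finset_sum _ fun j _ =>
      (continuous_apply j).comp (continuous_apply i)
  obtain ⟨γs, hγsK, hmax⟩ := hKcompact.exists_isMaxOn hKne hcont.continuousOn
  obtain ⟨hle, hrow', hcol'⟩ := hγsK
  refine ⟨γs, hle, hrow', hcol', ?_⟩
  have hmass_le : ∑ i, ∑ j, γs i j ≤ ∑ i, p i := Finset.sum_le_sum fun i _ => hrow' i
  rcases eq_or_lt_of_le hmass_le with h | h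
  · exact h
  exfalso
  -- find a row with slack
  have hri : ∃ i, ∑ j, γs i j < p i := by
    by_contra hcon
    push_neg at hcon
    exact absurd (Finset.sum_le_sum fun i _ => hcon i) (not_le.mpr h)
  obtain ⟨i0, hi0⟩ := hri
  -- find a column with slack
  have hcj : ∃ j, ∑ i, γs i j < q j := by
    by_contra hcon
    push_neg at hcon
    have : ∑ j, q j ≤ ∑ j, ∑ i, γs i j := Finset.sum_le_sum fun j _ => hcon j
    rw [Finset.sum_comm] at this
    linarith
  obtain ⟨j0, hj0⟩ := hcj
  set ε : ℝ := min (p i0 - ∑ j, γs i0 j) (q j0 - ∑ i, γs i j0) with hε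
  have hεpos : 0 < ε := lt_min (by linarith) (by linarith)
  set γ'' : Fin n → Fin m → ℝ :=
    fun i j => γs i j + (if i = i0 then (if j = j0 then ε else 0) else 0) with hγ''
  have hrowsum : ∀ i, ∑ j, γ'' i j = (∑ j, γs i j) + (if i = i0 then ε else 0) := by
    intro i
    rw [hγ'', Finset.sum_add_distrib]
    congr 1
    by_cases hi : i = i0 <;> simp [hi]
  have hcolsum : ∀ j, ∑ i, γ'' i j = (∑ i, γs i j) + (if j = j0 then ε else 0) := by
    intro j
    rw [hγ'', Finset.sum_add_distrib]
    congr 1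
    by_cases hj : j = j0 <;> simp [hj, Finset.sum_ite_eq]
  have hmem : γ'' ∈ K := by
    refine ⟨fun i j => ?_, fun i => ?_, fun j => ?_⟩
    · have : (0:ℝ) ≤ (if i = i0 then (if j = j0 then ε else 0) else 0) := by
        split <;> [skip; rfl] ; split <;> [exact le_of_lt hεpos; rfl]
      calc γ i j ≤ γs i j := hle i j
        _ ≤ γ'' i j := le_add_of_nonneg_right this
    · rw [hrowsum]
      by_cases hi : i = i0
      · subst hi
        have h1 : ε ≤ p i - ∑ j, γs i j := min_le_left _ _
        simp only [if_pos rfl, if_true, eq_self_iff_true]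
        linarith
      · simp [hi, hrow' i]
    · rw [hcolsum]
      by_cases hj : j = j0
      · subst hj
        have h1 : ε ≤ q j - ∑ i, γs i j := min_le_right _ _
        simp only [if_pos rfl, if_true, eq_self_iff_true]
        linarith
      · simp [hj, hcol' j]
  have hbig : ∑ i, ∑ j, γs i j < ∑ i, ∑ j, γ'' i j := by
    have : ∑ i, ∑ j, γ'' i j = (∑ i, ∑ j, γs i j) + ε := by
      rw [Finset.sum_congr rfl fun i _ => hrowsum i, Finset.sum_add_distrib]
      simp
    linarith
  exact absurd (hmax hmem) (not_le.mpr hbig)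

/-- For large enough `λ`, every minimizer of the fused partial GW objective
transports the full mass `min(|μ|,|ν|) = |μ|`. -/
theorem fpgw_large_lambda_full_mass {n m : ℕ} [NeZero n] [NeZero m]
    (p : Fin n → ℝ) (q : Fin m → ℝ) (hp : ∀ i, 0 ≤ p i) (hq : ∀ j, 0 ≤ q j)
    (hppos : 0 < ∑ i, p i) (hpq : ∑ i, p i ≤ ∑ j, q j)
    (C : Fin n → Fin m → ℝ) (hC : ∀ i j, 0 ≤ C i j)
    (M : Fin n → Fin m → Fin n → Fin m → ℝ) (hM : ∀ i j i' j', 0 ≤ M i j i' j')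
    (ω₁ ω₂ lam : ℝ) (hω₁ : 0 ≤ ω₁) (hω₂ : 0 ≤ ω₂)
    (hlam : ω₁ * ((Finset.univ : Finset (Fin n × Fin m)).sup'
          Finset.univ_nonempty (fun x => C x.1 x.2)) / (∑ i, p i)
        + ω₂ * ((Finset.univ : Finset ((Fin n × Fin m) × Fin n × Fin m)).sup'
          Finset.univ_nonempty (fun x => M x.1.1 x.1.2 x.2.1 x.2.2))
        < 2 * lam)
    (Γle : Set (Fin n → Fin m → ℝ))
    (hΓle : Γle = {γ | (∀ i j, 0 ≤ γ i j) ∧ (∀ i, ∑ j, γ i j ≤ p i) ∧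
      (∀ j, ∑ i, γ i j ≤ q j)})
    (J : (Fin n → Fin m → ℝ) → ℝ)
    (hJ : J = fun γ =>
      ω₁ * (∑ i, ∑ j, C i j * γ i j) +
      ω₂ * (∑ i, ∑ j, ∑ i', ∑ j', M i j i' j' * γ i j * γ i' j') +
      lam * ((∑ i, p i) ^ 2 + (∑ j, q j) ^ 2 - 2 * (∑ i, ∑ j, γ i j) ^ 2))
    (γ : Fin n → Fin m → ℝ) (hγ : γ ∈ Γle) (hmin : ∀ γ' ∈ Γle, J γ ≤ J γ') :
    ∑ i, ∑ j, γ i j = ∑ i, p i := by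
  classical
  subst hΓle hJ
  obtain ⟨hγ0, hγrow, hγcol⟩ := hγ
  set Cmax : ℝ := (Finset.univ : Finset (Fin n × Fin m)).sup'
      Finset.univ_nonempty (fun x => C x.1 x.2) with hCmax
  set Mmax : ℝ := (Finset.univ : Finset ((Fin n × Fin m) × Fin n × Fin m)).sup'
      Finset.univ_nonempty (fun x => M x.1.1 x.1.2 x.2.1 x.2.2) with hMmax
  have hCle : ∀ i j, C i j ≤ Cmax := fun i j =>
    Finset.le_sup' (f := fun x : Fin n × Fin m => C x.1 x.2) (Finset.mem_univ (i, j))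
  have hMle : ∀ i j i' j', M i j i' j' ≤ Mmax := fun i j i' j' =>
    Finset.le_sup' (f := fun x : (Fin n × Fin m) × Fin n × Fin m => M x.1.1 x.1.2 x.2.1 x.2.2)
      (Finset.mem_univ ((i, j), (i', j')))
  have hCmax0 : (0:ℝ) ≤ Cmax := le_trans (hC 0 0) (hCle 0 0)
  have hMmax0 : (0:ℝ) ≤ Mmax := le_trans (hM 0 0 0 0) (hMle 0 0 0 0)
  set S : ℝ := ∑ i, p i with hS
  set s : ℝ := ∑ i, ∑ j, γ i j with hs
  have hsS : s ≤ S := Finset.sum_le_sum fun i _ => hγrow i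
  rcases eq_or_lt_of_le hsS with h | hlt
  · exact h
  exfalso
  have hs0 : 0 ≤ s :=
    Finset.sum_nonneg fun i _ => Finset.sum_nonneg fun j _ => hγ0 i j
  obtain ⟨γs, hle, hrow', hcol', hmass⟩ :=
    exists_full_extension p q hpq γ hγ0 hγrow hγcol
  have hγs0 : ∀ i j, 0 ≤ γs i j := fun i j => le_trans (hγ0 i j) (hle i j)
  have hmem : γs ∈ {γ | (∀ i j, 0 ≤ γ i j) ∧ (∀ i, ∑ j, γ i j ≤ p i) ∧
      (∀ j, ∑ i, γ i j ≤ q j)} := ⟨hγs0, hrow', hcol'⟩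
  have hkey := hmin γs hmem
  simp only at hkey
  -- linear part bound
  have hA : (∑ i, ∑ j, C i j * γs i j) - (∑ i, ∑ j, C i j * γ i j) ≤ Cmax * (S - s) := by
    have e1 : (∑ i, ∑ j, C i j * γs i j) - (∑ i, ∑ j, C i j * γ i j)
        = ∑ i, ∑ j, (C i j * γs i j - C i j * γ i j) := by
      rw [← Finset.sum_sub_distrib]
      exact Finset.sum_congr rfl fun i _ => (Finset.sum_sub_distrib _ _).symm
    have e2 : Cmax * (S - s) = ∑ i, ∑ j, Cmax * (γs i j - γ i j) := by
      have e3 : S - s = ∑ i, ∑ j, (γs i j - γ i j) := by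
        rw [hS, hs, ← hmass, ← Finset.sum_sub_distrib]
        exact Finset.sum_congr rfl fun i _ => (Finset.sum_sub_distrib _ _).symm
      rw [e3, Finset.mul_sum]
      exact Finset.sum_congr rfl fun i _ => Finset.mul_sum _ _ _
    rw [e1, e2]
    refine Finset.sum_le_sum fun i _ => Finset.sum_le_sum fun j _ => ?_
    rw [← mul_sub]
    exact mul_le_mul_of_nonneg_right (hCle i j) (by linarith [hle i j])
  -- quadratic part bound
  have sq_expand : ∀ f : Fin n → Fin m → ℝ,
      (∑ i, ∑ j, f i j) ^ 2 = ∑ i, ∑ j, ∑ i', ∑ j', f i j * f i' j' := by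
    intro f
    rw [sq, Finset.sum_mul]
    refine Finset.sum_congr rfl fun i _ => ?_
    rw [Finset.sum_mul]
    refine Finset.sum_congr rfl fun j _ => ?_
    rw [Finset.mul_sum]
    refine Finset.sum_congr rfl fun i' _ => ?_
    rw [Finset.mul_sum]
  have hB : (∑ i, ∑ j, ∑ i', ∑ j', M i j i' j' * γs i j * γs i' j')
      - (∑ i, ∑ j, ∑ i', ∑ j', M i j i' j' * γ i j * γ i' j')
      ≤ Mmax * (S ^ 2 - s ^ 2) := by
    have e2 : Mmax * (S ^ 2 - s ^ 2)
        = ∑ i, ∑ j, ∑ i', ∑ j', Mmax * (γs i j * γs i' j' - γ i j * γ i' j') := by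
      simp only [← Finset.mul_sum, ← Finset.sum_sub_distrib]
      congr 1
      rw [hS, hs, ← hmass, sq_expand, sq_expand]
      simp only [← Finset.sum_sub_distrib]
    rw [← Finset.sum_sub_distrib, e2]
    refine Finset.sum_le_sum fun i _ => ?_
    rw [← Finset.sum_sub_distrib]
    refine Finset.sum_le_sum fun j _ => ?_
    rw [← Finset.sum_sub_distrib]
    refine Finset.sum_le_sum fun i' _ => ?_
    rw [← Finset.sum_sub_distrib]
    refine Finset.sum_le_sum fun j' _ => ?_
    have hd : 0 ≤ γs i j * γs i' j' - γ i j * γ i' j' := by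
      have := mul_le_mul (hle i j) (hle i' j') (hγ0 i' j') (hγs0 i j)
      linarith
    have : M i j i' j' * γs i j * γs i' j' - M i j i' j' * γ i j * γ i' j'
        = M i j i' j' * (γs i j * γs i' j' - γ i j * γ i' j') := by ring
    rw [this]
    exact mul_le_mul_of_nonneg_right (hMle i j i' j') hd
  -- assemble
  rw [hmass] at hkey
  rw [← hS] at hkey
  rw [← hs] at hkey
  have hlam' : ω₁ * Cmax < (2 * lam - ω₂ * Mmax) * S := by
    have h1 : ω₁ * Cmax / S < 2 * lam - ω₂ * Mmax := by linarith
    calc ω₁ * Cmax = (ω₁ * Cmax / S) * S := by field_simp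
      _ < (2 * lam - ω₂ * Mmax) * S := mul_lt_mul_of_pos_right h1 hppos
  have h2lam : 0 < 2 * lam - ω₂ * Mmax := by
    have hdiv : 0 ≤ ω₁ * Cmax / S := div_nonneg (mul_nonneg hω₁ hCmax0) hppos.le
    linarith
  have f1 := mul_le_mul_of_nonneg_left hA hω₁
  have f2 := mul_le_mul_of_nonneg_left hB hω₂
  have f3 := mul_lt_mul_of_pos_right hlam' (sub_pos.2 hlt)
  have f4 : 0 ≤ (2 * lam - ω₂ * Mmax) * ((S - s) * s) :=
    mul_nonneg h2lam.le (mul_nonneg (by linarith) hs0)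
  nlinarith [f1, f2, f3, f4, hkey]
end
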